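/- arXiv:1307.5884 — 2 statements merged into one kernel-verified Lean document; each statement's English description precedes it below -/
import Mathlib

section
/- Let r, t be sequences of nonzero reals, s a sequence with s_0 ≠ 0, and p = (p_n) bounded with p_n ≥ 1. The space l(r,s,t,p;Δ) = {x ∈ ℝ^ℕ : ∑_n |(1/r_n) ∑_{k=0}^n s_{n−k} t_k (x_k − x_{k−1})|^{p_n} < ∞} (with x_{−1} = 0) is a complete linear metric space under the paranorm h̃(x) = (∑_n |(1/r_n) ∑_{k=0}^n s_{n−k} t_k Δx_k|^{p_n})^{1/M}, where M = sup_n p_n. -/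
open Finset Filter Topology ENNReal

/-- The difference operator `Δ` with the convention `x₋₁ = 0`. -/
def del (x : ℕ → ℝ) (k : ℕ) : ℝ :=
  x k - if k = 0 then 0 else x (k - 1)

/-- The generalized-means-of-differences transform `(A(r,s,t)·Δ)x`. -/
noncomputable def Amap (r s t : ℕ → ℝ) (x : ℕ → ℝ) (n : ℕ) : ℝ :=
  (1 / r n) * ∑ k ∈ Finset.range (n + 1), s (n - k) * t k * del x k

/-- The modular `σ_p` on `l(r,s,t,p;Δ)`, with values in `[0,∞]`. -/
noncomputable def sigmaP (r s t p : ℕ → ℝ) (x : ℕ → ℝ) : ℝ≥0∞ :=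
  ∑' n, ENNReal.ofReal (|Amap r s t x n| ^ p n)

/-- The space `l(r,s,t,p;Δ)`. -/
def lrstp (r s t p : ℕ → ℝ) : Set (ℕ → ℝ) :=
  {x | sigmaP r s t p x < ⊤}

/-- The paranorm `h̃` on `l(r,s,t,p;Δ)`. -/
noncomputable def htilde (r s t p : ℕ → ℝ) (M : ℝ) (x : ℕ → ℝ) : ℝ :=
  ((sigmaP r s t p x).toReal) ^ (1 / M)

/-- The Luxemburg norm on `l(r,s,t,p;Δ)`. -/
noncomputable def lux (r s t p : ℕ → ℝ) (x : ℕ → ℝ) : ℝ :=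
  sInf {c : ℝ | 0 < c ∧ sigmaP r s t p (c⁻¹ • x) ≤ 1}

section Aux

variable (r s t : ℕ → ℝ)

lemma del_add (x y : ℕ → ℝ) (k : ℕ) : del (x + y) k = del x k + del y k := by
  simp only [del, Pi.add_apply]; split <;> ring

lemma del_smul (c : ℝ) (x : ℕ → ℝ) (k : ℕ) : del (c • x) k = c * del x k := by
  simp only [del, Pi.smul_apply, smul_eq_mul]; split <;> ring

lemma del_sub (x y : ℕ → ℝ) (k : ℕ) : del (x - y) k = del x k - del y k := by
  simp only [del, Pi.sub_apply]; split <;> ring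

lemma del_neg (x : ℕ → ℝ) (k : ℕ) : del (-x) k = -del x k := by
  simp only [del, Pi.neg_apply]; split <;> ring

lemma Amap_add (x y : ℕ → ℝ) (n : ℕ) :
    Amap r s t (x + y) n = Amap r s t x n + Amap r s t y n := by
  simp only [Amap, del_add, mul_add, Finset.sum_add_distrib]

lemma Amap_smul (c : ℝ) (x : ℕ → ℝ) (n : ℕ) :
    Amap r s t (c • x) n = c * Amap r s t x n := by
  simp only [Amap, del_smul]
  rw [show (∑ k ∈ Finset.range (n+1), s (n-k) * t k * (c * del x k))
      = c * ∑ k ∈ Finset.range (n+1), s (n-k) * t k * del x k by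
    rw [Finset.mul_sum]; exact Finset.sum_congr rfl fun k _ => by ring]
  ring

lemma Amap_sub (x y : ℕ → ℝ) (n : ℕ) :
    Amap r s t (x - y) n = Amap r s t x n - Amap r s t y n := by
  simp only [Amap, del_sub, mul_sub, Finset.sum_sub_distrib]

lemma Amap_neg (x : ℕ → ℝ) (n : ℕ) : Amap r s t (-x) n = -Amap r s t x n := by
  simp only [Amap, del_neg, mul_neg, Finset.sum_neg_distrib]

lemma Amap_zero (n : ℕ) : Amap r s t 0 n = 0 := by
  simp [Amap, del]

variable (p : ℕ → ℝ) (M : ℝ)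

lemma sigma_eq (hp0 : ∀ n, 0 ≤ p n) (x : ℕ → ℝ) :
    sigmaP r s t p x = ∑' n, (ENNReal.ofReal |Amap r s t x n|) ^ (p n) := by
  unfold sigmaP
  exact tsum_congr fun n => (ENNReal.ofReal_rpow_of_nonneg (abs_nonneg _) (hp0 n)).symm

lemma sigma_zero (hp1 : ∀ n, 1 ≤ p n) : sigmaP r s t p 0 = 0 := by
  unfold sigmaP
  rw [show (fun n => ENNReal.ofReal (|Amap r s t 0 n| ^ p n)) = fun _ => 0 by
    funext n
    rw [Amap_zero, abs_zero, Real.zero_rpow (by linarith [hp1 n]), ENNReal.ofReal_zero]]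
  exact tsum_zero

lemma sigma_neg (x : ℕ → ℝ) : sigmaP r s t p (-x) = sigmaP r s t p x := by
  unfold sigmaP
  exact tsum_congr fun n => by rw [Amap_neg, abs_neg]

lemma sigma_smul_le (hp1 : ∀ n, 1 ≤ p n) (hpM : ∀ n, p n ≤ M) (c : ℝ) (x : ℕ → ℝ) :
    sigmaP r s t p (c • x)
      ≤ (ENNReal.ofReal |c| + ENNReal.ofReal |c| ^ M) * sigmaP r s t p x := by
  have hp0 : ∀ n, (0:ℝ) ≤ p n := fun n => le_trans zero_le_one (hp1 n)
  rw [sigma_eq r s t p hp0, sigma_eq r s t p hp0, ← ENNReal.tsum_mul_left]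
  apply ENNReal.tsum_le_tsum
  intro n
  set κ := ENNReal.ofReal |c| with hκdef
  have h1 : ENNReal.ofReal |Amap r s t (c • x) n| = κ * ENNReal.ofReal |Amap r s t x n| := by
    rw [Amap_smul, abs_mul, ENNReal.ofReal_mul (abs_nonneg _)]
  rw [h1, ENNReal.mul_rpow_of_nonneg _ _ (hp0 n)]
  have hκ : κ ^ p n ≤ κ + κ ^ M := by
    rcases le_total κ 1 with h | h
    · calc κ ^ p n ≤ κ ^ (1:ℝ) := ENNReal.rpow_le_rpow_of_exponent_ge h (hp1 n)
        _ = κ := ENNReal.rpow_one κ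
        _ ≤ _ := le_add_of_nonneg_right zero_le
    · exact le_trans (ENNReal.rpow_le_rpow_of_exponent_le h (hpM n))
        (le_add_of_nonneg_left zero_le)
  exact mul_le_mul_left hκ _

lemma sigma_smul_le_of_le_one (hp1 : ∀ n, 1 ≤ p n) {c : ℝ} (hc : |c| ≤ 1) (x : ℕ → ℝ) :
    sigmaP r s t p (c • x) ≤ ENNReal.ofReal |c| * sigmaP r s t p x := by
  have hp0 : ∀ n, (0:ℝ) ≤ p n := fun n => le_trans zero_le_one (hp1 n)
  rw [sigma_eq r s t p hp0, sigma_eq r s t p hp0, ← ENNReal.tsum_mul_left]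
  apply ENNReal.tsum_le_tsum
  intro n
  have h1 : ENNReal.ofReal |Amap r s t (c • x) n|
      = ENNReal.ofReal |c| * ENNReal.ofReal |Amap r s t x n| := by
    rw [Amap_smul, abs_mul, ENNReal.ofReal_mul (abs_nonneg _)]
  rw [h1, ENNReal.mul_rpow_of_nonneg _ _ (hp0 n)]
  have hκ : (ENNReal.ofReal |c|) ^ p n ≤ ENNReal.ofReal |c| := by
    calc (ENNReal.ofReal |c|) ^ p n ≤ (ENNReal.ofReal |c|) ^ (1:ℝ) :=
          ENNReal.rpow_le_rpow_of_exponent_ge (ENNReal.ofReal_le_one.mpr hc) (hp1 n)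
      _ = ENNReal.ofReal |c| := ENNReal.rpow_one _
  exact mul_le_mul_left hκ _

lemma sigma_add_le (hp1 : ∀ n, 1 ≤ p n) (hpM : ∀ n, p n ≤ M) :
    ∀ x y, sigmaP r s t p (x + y)
      ≤ (2:ℝ≥0∞) ^ M * (sigmaP r s t p x + sigmaP r s t p y) := by
  intro x y
  have hp0 : ∀ n, (0:ℝ) ≤ p n := fun n => le_trans zero_le_one (hp1 n)
  rw [sigma_eq r s t p hp0, sigma_eq r s t p hp0, sigma_eq r s t p hp0,
    ← ENNReal.tsum_add, ← ENNReal.tsum_mul_left]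
  apply ENNReal.tsum_le_tsum
  intro n
  have h1 : ENNReal.ofReal |Amap r s t (x + y) n|
      ≤ ENNReal.ofReal |Amap r s t x n| + ENNReal.ofReal |Amap r s t y n| := by
    rw [Amap_add, ← ENNReal.ofReal_add (abs_nonneg _) (abs_nonneg _)]
    exact ENNReal.ofReal_le_ofReal (abs_add_le _ _)
  calc ENNReal.ofReal |Amap r s t (x + y) n| ^ p n
      ≤ (ENNReal.ofReal |Amap r s t x n| + ENNReal.ofReal |Amap r s t y n|) ^ p n :=
        ENNReal.rpow_le_rpow h1 (hp0 n)
    _ ≤ (2:ℝ≥0∞) ^ (p n - 1) *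
        (ENNReal.ofReal |Amap r s t x n| ^ p n + ENNReal.ofReal |Amap r s t y n| ^ p n) :=
        ENNReal.rpow_add_le_mul_rpow_add_rpow _ _ (hp1 n)
    _ ≤ (2:ℝ≥0∞) ^ M *
        (ENNReal.ofReal |Amap r s t x n| ^ p n + ENNReal.ofReal |Amap r s t y n| ^ p n) :=
        mul_le_mul_left
          (ENNReal.rpow_le_rpow_of_exponent_le (by norm_num) (by linarith [hpM n])) _

lemma tsum_Lp_add (u v : ℕ → ℝ≥0∞) (hM1 : 1 ≤ M) :
    (∑' n, (u n + v n) ^ M) ^ (1/M)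
      ≤ (∑' n, u n ^ M) ^ (1/M) + (∑' n, v n ^ M) ^ (1/M) := by
  have h := ENNReal.lintegral_Lp_add_le
      (μ := MeasureTheory.Measure.count (α := ℕ)) (f := u) (g := v)
      (measurable_of_countable u).aemeasurable (measurable_of_countable v).aemeasurable hM1
  simpa [MeasureTheory.lintegral_count] using h

lemma Hsigma_add_le (hp1 : ∀ n, 1 ≤ p n) (hpM : ∀ n, p n ≤ M) (hM1 : 1 ≤ M) (x y : ℕ → ℝ) :
    (sigmaP r s t p (x + y)) ^ (1/M)
      ≤ (sigmaP r s t p x) ^ (1/M) + (sigmaP r s t p y) ^ (1/M) := by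
  have hp0 : ∀ n, (0:ℝ) ≤ p n := fun n => le_trans zero_le_one (hp1 n)
  have hM0 : (0:ℝ) < M := lt_of_lt_of_le one_pos hM1
  set u : ℕ → ℝ≥0∞ := fun n => (ENNReal.ofReal |Amap r s t x n|) ^ (p n / M) with hu
  set v : ℕ → ℝ≥0∞ := fun n => (ENNReal.ofReal |Amap r s t y n|) ^ (p n / M) with hv
  have huM : ∀ n, u n ^ M = (ENNReal.ofReal |Amap r s t x n|) ^ p n := fun n => by
    rw [hu, ← ENNReal.rpow_mul, div_mul_cancel₀ _ (ne_of_gt hM0)]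
  have hvM : ∀ n, v n ^ M = (ENNReal.ofReal |Amap r s t y n|) ^ p n := fun n => by
    rw [hv, ← ENNReal.rpow_mul, div_mul_cancel₀ _ (ne_of_gt hM0)]
  have key : ∀ n, (ENNReal.ofReal |Amap r s t (x + y) n|) ^ p n ≤ (u n + v n) ^ M := by
    intro n
    have h1 : ENNReal.ofReal |Amap r s t (x + y) n|
        ≤ ENNReal.ofReal |Amap r s t x n| + ENNReal.ofReal |Amap r s t y n| := by
      rw [Amap_add, ← ENNReal.ofReal_add (abs_nonneg _) (abs_nonneg _)]
      exact ENNReal.ofReal_le_ofReal (abs_add_le _ _)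
    have h2 : (ENNReal.ofReal |Amap r s t (x + y) n|) ^ (p n / M) ≤ u n + v n := by
      refine le_trans (ENNReal.rpow_le_rpow h1 (div_nonneg (hp0 n) (le_of_lt hM0))) ?_
      exact ENNReal.rpow_add_le_add_rpow _ _ (div_nonneg (hp0 n) (le_of_lt hM0))
        (div_le_one_of_le₀ (hpM n) (le_of_lt hM0))
    calc (ENNReal.ofReal |Amap r s t (x + y) n|) ^ p n
        = ((ENNReal.ofReal |Amap r s t (x + y) n|) ^ (p n / M)) ^ M := by
          rw [← ENNReal.rpow_mul, div_mul_cancel₀ _ (ne_of_gt hM0)]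
      _ ≤ (u n + v n) ^ M := ENNReal.rpow_le_rpow h2 (le_of_lt hM0)
  rw [sigma_eq r s t p hp0, sigma_eq r s t p hp0, sigma_eq r s t p hp0]
  calc (∑' n, (ENNReal.ofReal |Amap r s t (x + y) n|) ^ p n) ^ (1/M)
      ≤ (∑' n, (u n + v n) ^ M) ^ (1/M) :=
        ENNReal.rpow_le_rpow (ENNReal.tsum_le_tsum key) (by positivity)
    _ ≤ (∑' n, u n ^ M) ^ (1/M) + (∑' n, v n ^ M) ^ (1/M) := tsum_Lp_add M u v hM1
    _ = (∑' n, (ENNReal.ofReal |Amap r s t x n|) ^ p n) ^ (1/M)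
        + (∑' n, (ENNReal.ofReal |Amap r s t y n|) ^ p n) ^ (1/M) := by
        rw [tsum_congr huM, tsum_congr hvM]

lemma htilde_nonneg (x : ℕ → ℝ) : 0 ≤ htilde r s t p M x :=
  Real.rpow_nonneg ENNReal.toReal_nonneg _

lemma htilde_eq (x : ℕ → ℝ) :
    htilde r s t p M x = ((sigmaP r s t p x) ^ (1/M)).toReal :=
  ENNReal.toReal_rpow _ _

lemma htilde_add_le (hp1 : ∀ n, 1 ≤ p n) (hpM : ∀ n, p n ≤ M) (hM1 : 1 ≤ M) {x y : ℕ → ℝ}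
    (hx : sigmaP r s t p x ≠ ⊤) (hy : sigmaP r s t p y ≠ ⊤) :
    htilde r s t p M (x + y) ≤ htilde r s t p M x + htilde r s t p M y := by
  have hM0 : (0:ℝ) ≤ 1/M := by positivity
  have hfx : (sigmaP r s t p x) ^ (1/M) ≠ ⊤ :=
    ne_of_lt (ENNReal.rpow_lt_top_of_nonneg hM0 hx)
  have hfy : (sigmaP r s t p y) ^ (1/M) ≠ ⊤ :=
    ne_of_lt (ENNReal.rpow_lt_top_of_nonneg hM0 hy)
  rw [htilde_eq, htilde_eq, htilde_eq, ← ENNReal.toReal_add hfx hfy]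
  exact ENNReal.toReal_mono (ENNReal.add_ne_top.mpr ⟨hfx, hfy⟩)
    (Hsigma_add_le r s t p M hp1 hpM hM1 x y)

lemma htilde_smul_le (hp1 : ∀ n, 1 ≤ p n) (hpM : ∀ n, p n ≤ M) (hM1 : 1 ≤ M)
    {x : ℕ → ℝ} (hx : sigmaP r s t p x ≠ ⊤) (c : ℝ) :
    htilde r s t p M (c • x) ≤ (|c| + |c| ^ M) ^ (1/M) * htilde r s t p M x := by
  have hM0 : (0:ℝ) < M := lt_of_lt_of_le one_pos hM1
  set D : ℝ≥0∞ := ENNReal.ofReal |c| + ENNReal.ofReal |c| ^ M with hD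
  have hDt : D ≠ ⊤ := by
    rw [hD]
    exact ENNReal.add_ne_top.mpr ⟨ENNReal.ofReal_ne_top,
      ne_of_lt (ENNReal.rpow_lt_top_of_nonneg (le_of_lt hM0) ENNReal.ofReal_ne_top)⟩
  have hDr : D.toReal = |c| + |c| ^ M := by
    rw [hD, ENNReal.toReal_add ENNReal.ofReal_ne_top
        (ne_of_lt (ENNReal.rpow_lt_top_of_nonneg (le_of_lt hM0) ENNReal.ofReal_ne_top)),
      ENNReal.toReal_ofReal (abs_nonneg c),
      ENNReal.ofReal_rpow_of_nonneg (abs_nonneg c) (le_of_lt hM0),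
      ENNReal.toReal_ofReal (Real.rpow_nonneg (abs_nonneg c) M)]
  have h := sigma_smul_le r s t p M hp1 hpM c x
  have h2 : (sigmaP r s t p (c • x)).toReal ≤ D.toReal * (sigmaP r s t p x).toReal := by
    rw [← ENNReal.toReal_mul]
    exact ENNReal.toReal_mono (ENNReal.mul_ne_top hDt hx) h
  calc htilde r s t p M (c • x)
      ≤ (D.toReal * (sigmaP r s t p x).toReal) ^ (1/M) :=
        Real.rpow_le_rpow ENNReal.toReal_nonneg h2 (by positivity)
    _ = (|c| + |c| ^ M) ^ (1/M) * htilde r s t p M x := by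
        rw [Real.mul_rpow ENNReal.toReal_nonneg ENNReal.toReal_nonneg, hDr, htilde]

/-- Inverse of the triangular system: recovers `del x` from `Amap x`. -/
noncomputable def recDel (r s t : ℕ → ℝ) (a : ℕ → ℝ) : ℕ → ℝ
  | n => (r n * a n - ∑ k ∈ (Finset.range n).attach,
        s (n - k.1) * t k.1 * recDel r s t a k.1) / (s 0 * t n)
  decreasing_by exact Finset.mem_range.mp k.2

lemma recDel_spec (hr : ∀ n, r n ≠ 0) (ht : ∀ n, t n ≠ 0) (hs0 : s 0 ≠ 0)
    (x : ℕ → ℝ) : ∀ n, recDel r s t (fun j => Amap r s t x j) n = del x n := by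
  intro n
  induction n using Nat.strong_induction_on with
  | _ n ih =>
    rw [recDel]
    have hsum : ∑ k ∈ (Finset.range n).attach,
        s (n - k.1) * t k.1 * recDel r s t (fun j => Amap r s t x j) k.1
        = ∑ k ∈ Finset.range n, s (n - k) * t k * del x k := by
      rw [Finset.sum_attach (Finset.range n)
        (fun k => s (n - k) * t k * recDel r s t (fun j => Amap r s t x j) k)]
      exact Finset.sum_congr rfl fun k hk => by rw [ih k (Finset.mem_range.mp hk)]
    have hA : r n * Amap r s t x n
        = ∑ k ∈ Finset.range (n + 1), s (n - k) * t k * del x k := by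
      unfold Amap
      rw [← mul_assoc, mul_one_div, div_self (hr n), one_mul]
    rw [hsum, hA, Finset.sum_range_succ, Nat.sub_self, add_sub_cancel_left]
    exact mul_div_cancel_left₀ _ (mul_ne_zero hs0 (ht n))

lemma recDel_tendsto {a : ℕ → ℕ → ℝ} {b : ℕ → ℝ}
    (h : ∀ j, Tendsto (fun m => a m j) atTop (𝓝 (b j))) :
    ∀ n, Tendsto (fun m => recDel r s t (a m) n) atTop (𝓝 (recDel r s t b n)) := by
  intro n
  induction n using Nat.strong_induction_on with
  | _ n ih =>
    have hrw : ∀ m, recDel r s t (a m) n = (r n * a m n - ∑ k ∈ (Finset.range n).attach,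
        s (n - k.1) * t k.1 * recDel r s t (a m) k.1) / (s 0 * t n) := fun m => by
      rw [recDel]
    rw [recDel]
    simp only [hrw]
    exact ((tendsto_const_nhds.mul (h n)).sub
      (tendsto_finset_sum _ fun k _ =>
        (ih k.1 (Finset.mem_range.mp k.2)).const_mul _)).div_const _

lemma sum_del (x : ℕ → ℝ) (n : ℕ) : ∑ k ∈ Finset.range (n + 1), del x k = x n := by
  induction n with
  | zero => simp [del]
  | succ n ih =>
    rw [Finset.sum_range_succ, ih]
    simp only [del, Nat.succ_ne_zero, if_false, Nat.add_sub_cancel]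
    ring

lemma abs_Amap_le (hp1 : ∀ n, 1 ≤ p n) (hpM : ∀ n, p n ≤ M) (hM1 : 1 ≤ M)
    {d : ℕ → ℝ} (hd : sigmaP r s t p d ≠ ⊤) (hh1 : htilde r s t p M d ≤ 1) (n : ℕ) :
    |Amap r s t d n| ≤ htilde r s t p M d := by
  have hM0 : (0:ℝ) < M := lt_of_lt_of_le one_pos hM1
  set h := htilde r s t p M d with hh
  have hb : |Amap r s t d n| ^ p n ≤ (sigmaP r s t p d).toReal := by
    have h1 : ENNReal.ofReal (|Amap r s t d n| ^ p n) ≤ sigmaP r s t p d :=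
      ENNReal.le_tsum n
    have h2 := ENNReal.toReal_mono hd h1
    rwa [ENNReal.toReal_ofReal (Real.rpow_nonneg (abs_nonneg _) _)] at h2
  have hσ : (sigmaP r s t p d).toReal = h ^ M := by
    rw [hh, htilde, ← Real.rpow_mul ENNReal.toReal_nonneg,
      one_div_mul_cancel (ne_of_gt hM0), Real.rpow_one]
  rcases eq_or_lt_of_le (htilde_nonneg r s t p M d) with h0 | h0
  · -- h = 0
    rw [← hh] at h0
    rw [← h0]
    by_contra hlt
    push_neg at hlt
    have hpos : (0:ℝ) < |Amap r s t d n| ^ p n := Real.rpow_pos_of_pos hlt _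
    rw [hσ, ← h0, Real.zero_rpow (ne_of_gt hM0)] at hb
    linarith
  · by_contra hlt
    push_neg at hlt
    have h1 : h ^ p n < |Amap r s t d n| ^ p n :=
      Real.rpow_lt_rpow (le_of_lt h0) hlt (lt_of_lt_of_le one_pos (hp1 n))
    have h2 : h ^ M ≤ h ^ p n :=
      Real.rpow_le_rpow_of_exponent_ge h0 hh1 (hpM n)
    rw [hσ] at hb
    linarith

lemma Amap_tendsto {y : ℕ → ℕ → ℝ} {x : ℕ → ℝ}
    (h : ∀ k, Tendsto (fun l => y l k) atTop (𝓝 (x k))) (n : ℕ) :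
    Tendsto (fun l => Amap r s t (y l) n) atTop (𝓝 (Amap r s t x n)) := by
  have hdel : ∀ k, Tendsto (fun l => del (y l) k) atTop (𝓝 (del x k)) := by
    intro k
    unfold del
    rcases eq_or_ne k 0 with hk | hk
    · subst hk
      simpa using h 0
    · simp only [if_neg hk]
      exact (h k).sub (h (k - 1))
  unfold Amap
  exact Tendsto.const_mul _ (tendsto_finset_sum _ fun k _ => (hdel k).const_mul _)

lemma sigma_le_liminf (hp1 : ∀ n, 1 ≤ p n) {y : ℕ → ℕ → ℝ} {x : ℕ → ℝ}
    (h : ∀ n, Tendsto (fun l => Amap r s t (y l) n) atTop (𝓝 (Amap r s t x n))) :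
    sigmaP r s t p x ≤ liminf (fun l => sigmaP r s t p (y l)) atTop := by
  have hp0 : ∀ n, (0:ℝ) ≤ p n := fun n => le_trans zero_le_one (hp1 n)
  unfold sigmaP
  have hterm : ∀ n, ENNReal.ofReal (|Amap r s t x n| ^ p n)
      = liminf (fun l => ENNReal.ofReal (|Amap r s t (y l) n| ^ p n)) atTop := by
    intro n
    refine (Tendsto.liminf_eq ?_).symm
    have hc : Tendsto (fun l => |Amap r s t (y l) n| ^ p n) atTop
        (𝓝 (|Amap r s t x n| ^ p n)) := by
      have hcont : ContinuousAt (fun a : ℝ => |a| ^ p n) (Amap r s t x n) :=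
        (Real.continuousAt_rpow_const _ _ (Or.inr (hp0 n))).comp
          continuous_abs.continuousAt
      exact hcont.tendsto.comp (h n)
    exact (ENNReal.continuous_ofReal.continuousAt.tendsto.comp hc)
  calc ∑' n, ENNReal.ofReal (|Amap r s t x n| ^ p n)
      = ∑' n, liminf (fun l => ENNReal.ofReal (|Amap r s t (y l) n| ^ p n)) atTop :=
        tsum_congr hterm
    _ ≤ liminf (fun l => ∑' n, ENNReal.ofReal (|Amap r s t (y l) n| ^ p n)) atTop := by
        have := MeasureTheory.lintegral_liminf_le
          (μ := MeasureTheory.Measure.count (α := ℕ)) (u := atTop)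
          (f := fun l n => ENNReal.ofReal (|Amap r s t (y l) n| ^ p n))
          (fun l => measurable_of_countable _)
        simpa [MeasureTheory.lintegral_count] using this

end Aux

theorem lrstp_complete_paranormed
    (r s t p : ℕ → ℝ) (hr : ∀ n, r n ≠ 0) (ht : ∀ n, t n ≠ 0) (hs0 : s 0 ≠ 0)
    (hp : ∀ n, 1 ≤ p n) (M : ℝ) (hM : M = ⨆ n, p n) (hbd : BddAbove (Set.range p)) :
    -- `l(r,s,t,p;Δ)` is a linear subspace
    ((0 : ℕ → ℝ) ∈ lrstp r s t p) ∧
    (∀ x y, x ∈ lrstp r s t p → y ∈ lrstp r s t p → x + y ∈ lrstp r s t p) ∧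
    (∀ (c : ℝ) x, x ∈ lrstp r s t p → c • x ∈ lrstp r s t p) ∧
    -- `h̃` is a paranorm
    htilde r s t p M 0 = 0 ∧
    (∀ x, htilde r s t p M (-x) = htilde r s t p M x) ∧
    (∀ x y, x ∈ lrstp r s t p → y ∈ lrstp r s t p →
      htilde r s t p M (x + y) ≤ htilde r s t p M x + htilde r s t p M y) ∧
    (∀ (α : ℝ) (αs : ℕ → ℝ) (x : ℕ → ℝ) (xs : ℕ → ℕ → ℝ),
      x ∈ lrstp r s t p → (∀ m, xs m ∈ lrstp r s t p) →
      Tendsto αs atTop (𝓝 α) →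
      Tendsto (fun m => htilde r s t p M (xs m - x)) atTop (𝓝 0) →
      Tendsto (fun m => htilde r s t p M (αs m • xs m - α • x)) atTop (𝓝 0)) ∧
    -- completeness with respect to the paranorm `h̃`
    (∀ xs : ℕ → ℕ → ℝ, (∀ m, xs m ∈ lrstp r s t p) →
      (∀ ε : ℝ, 0 < ε → ∃ N, ∀ m l, N ≤ m → N ≤ l →
        htilde r s t p M (xs m - xs l) < ε) →
      ∃ x ∈ lrstp r s t p,
        Tendsto (fun m => htilde r s t p M (xs m - x)) atTop (𝓝 0)) := by
  have hpM : ∀ n, p n ≤ M := fun n => hM ▸ le_ciSup hbd n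
  have hM1 : (1:ℝ) ≤ M := le_trans (hp 0) (hpM 0)
  have hM0 : (0:ℝ) < M := lt_of_lt_of_le one_pos hM1
  have hmem : ∀ x, x ∈ lrstp r s t p ↔ sigmaP r s t p x < ⊤ := fun _ => Iff.rfl
  -- closure under smul
  have hsmul : ∀ (c : ℝ) (x : ℕ → ℝ), x ∈ lrstp r s t p → c • x ∈ lrstp r s t p := by
    intro c x hx
    rw [hmem] at hx ⊢
    refine lt_of_le_of_lt (sigma_smul_le r s t p M hp hpM c x) ?_
    exact ENNReal.mul_lt_top
      (ENNReal.add_lt_top.mpr ⟨ENNReal.ofReal_lt_top,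
        ENNReal.rpow_lt_top_of_nonneg (le_of_lt hM0) ENNReal.ofReal_ne_top⟩) hx
  -- closure under addition
  have hadd : ∀ x y, x ∈ lrstp r s t p → y ∈ lrstp r s t p → x + y ∈ lrstp r s t p := by
    intro x y hx hy
    rw [hmem] at hx hy ⊢
    refine lt_of_le_of_lt (sigma_add_le r s t p M hp hpM x y) ?_
    exact ENNReal.mul_lt_top
      (ENNReal.rpow_lt_top_of_nonneg (le_of_lt hM0) (by norm_num))
      (ENNReal.add_lt_top.mpr ⟨hx, hy⟩)
  -- closure under subtraction
  have hsubmem : ∀ x y, x ∈ lrstp r s t p → y ∈ lrstp r s t p →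
      x - y ∈ lrstp r s t p := by
    intro x y hx hy
    have hxy : x - y = x + (-1 : ℝ) • y := by
      funext k; simp [sub_eq_add_neg]
    rw [hxy]
    exact hadd x _ hx (hsmul (-1) y hy)
  refine ⟨?_, hadd, hsmul, ?_, ?_, ?_, ?_, ?_⟩
  · -- 0 ∈ lrstp
    rw [hmem, sigma_zero r s t p hp]
    exact ENNReal.zero_lt_top
  · -- htilde 0 = 0
    rw [htilde, sigma_zero r s t p hp]
    simp only [ENNReal.toReal_zero]
    exact Real.zero_rpow (by positivity)
  · -- htilde (-x) = htilde x
    intro x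
    rw [htilde, htilde, sigma_neg]
  · -- triangle inequality
    intro x y hx hy
    exact htilde_add_le r s t p M hp hpM hM1 (ne_of_lt hx) (ne_of_lt hy)
  · -- continuity of scalar multiplication
    intro α αs x xs hx hxs hα hconv
    -- bound on |αs m|
    obtain ⟨C, hC⟩ : ∃ C : ℝ, ∀ m, |αs m| ≤ C := by
      have hb := (hα.abs).bddAbove_range
      obtain ⟨C, hC⟩ := hb
      exact ⟨C, fun m => hC (Set.mem_range_self m)⟩
    have hC0 : (0:ℝ) ≤ C := le_trans (abs_nonneg _) (hC 0)
    set K : ℝ := (C + C ^ M) ^ (1/M) with hK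
    -- decomposition
    have hdecomp : ∀ m, αs m • xs m - α • x
        = αs m • (xs m - x) + (αs m - α) • x := by
      intro m; funext k
      simp only [Pi.add_apply, Pi.sub_apply, Pi.smul_apply, smul_eq_mul]
      ring
    have hd : ∀ m, xs m - x ∈ lrstp r s t p := fun m => hsubmem _ _ (hxs m) hx
    have hbound : ∀ m, htilde r s t p M (αs m • xs m - α • x)
        ≤ K * htilde r s t p M (xs m - x)
          + (|αs m - α| + |αs m - α| ^ M) ^ (1/M) * htilde r s t p M x := by
      intro m
      rw [hdecomp m]
      have h1 : htilde r s t p M (αs m • (xs m - x) + (αs m - α) • x)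
          ≤ htilde r s t p M (αs m • (xs m - x)) + htilde r s t p M ((αs m - α) • x) :=
        htilde_add_le r s t p M hp hpM hM1
          (ne_of_lt ((hmem _).mp (hsmul _ _ (hd m)))) (ne_of_lt ((hmem _).mp (hsmul _ _ hx)))
      refine le_trans h1 (add_le_add ?_ ?_)
      · refine le_trans (htilde_smul_le r s t p M hp hpM hM1 (ne_of_lt ((hmem _).mp (hd m))) _) ?_
        refine mul_le_mul_of_nonneg_right ?_ (htilde_nonneg r s t p M _)
        refine Real.rpow_le_rpow (by positivity) ?_ (by positivity)
        exact add_le_add (hC m) (Real.rpow_le_rpow (abs_nonneg _) (hC m) (le_of_lt hM0))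
      · exact htilde_smul_le r s t p M hp hpM hM1 (ne_of_lt ((hmem _).mp hx)) _
    -- the bound tends to 0
    have hterm1 : Tendsto (fun m => K * htilde r s t p M (xs m - x)) atTop (𝓝 0) := by
      simpa using hconv.const_mul K
    have hterm2 : Tendsto
        (fun m => (|αs m - α| + |αs m - α| ^ M) ^ (1/M) * htilde r s t p M x) atTop (𝓝 0) := by
      have hg : ContinuousAt (fun c : ℝ => (|c| + |c| ^ M) ^ (1/M)) 0 := by
        have h1 : ContinuousAt (fun c : ℝ => |c| + |c| ^ M) 0 := by
          refine ContinuousAt.add continuous_abs.continuousAt ?_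
          exact (Real.continuousAt_rpow_const _ _ (Or.inr (le_of_lt hM0))).comp
            continuous_abs.continuousAt
        exact h1.rpow_const (Or.inr (by positivity))
      have hδ : Tendsto (fun m => αs m - α) atTop (𝓝 0) := by
        simpa using hα.sub (tendsto_const_nhds (x := α))
      have h3 : Tendsto (fun m => (|αs m - α| + |αs m - α| ^ M) ^ (1/M)) atTop
          (𝓝 ((|(0:ℝ)| + |(0:ℝ)| ^ M) ^ (1/M))) := hg.tendsto.comp hδ
      have h4 : (|(0:ℝ)| + |(0:ℝ)| ^ M) ^ (1/M) = 0 := by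
        rw [abs_zero, Real.zero_rpow (ne_of_gt hM0), add_zero]
        exact Real.zero_rpow (by positivity)
      rw [h4] at h3
      simpa using h3.mul_const (htilde r s t p M x)
    have hsum : Tendsto (fun m => K * htilde r s t p M (xs m - x)
        + (|αs m - α| + |αs m - α| ^ M) ^ (1/M) * htilde r s t p M x) atTop (𝓝 0) := by
      simpa using hterm1.add hterm2
    exact squeeze_zero (fun m => htilde_nonneg r s t p M _) hbound hsum
  · -- completeness
    intro xs hxs hcauchy
    have hdmem : ∀ m l, xs m - xs l ∈ lrstp r s t p :=
      fun m l => hsubmem _ _ (hxs m) (hxs l)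
    -- the transformed sequences are Cauchy in each coordinate
    have hAcauchy : ∀ n, CauchySeq (fun m => Amap r s t (xs m) n) := by
      intro n
      rw [Metric.cauchySeq_iff]
      intro ε hε
      obtain ⟨N, hN⟩ := hcauchy (min ε 1) (lt_min hε one_pos)
      refine ⟨N, fun m hm l hl => ?_⟩
      have h1 := hN m l hm hl
      have h2 : |Amap r s t (xs m - xs l) n| ≤ htilde r s t p M (xs m - xs l) :=
        abs_Amap_le r s t p M hp hpM hM1 (ne_of_lt ((hmem _).mp (hdmem m l)))
          (le_of_lt (lt_of_lt_of_le h1 (min_le_right _ _))) n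
      rw [Real.dist_eq, ← Amap_sub]
      exact lt_of_le_of_lt h2 (lt_of_lt_of_le h1 (min_le_left _ _))
    choose A hA using fun n => cauchySeq_tendsto_of_complete (hAcauchy n)
    set x : ℕ → ℝ := fun n => ∑ k ∈ Finset.range (n + 1), recDel r s t A k with hxdef
    -- pointwise convergence
    have hptw : ∀ k, Tendsto (fun m => xs m k) atTop (𝓝 (x k)) := by
      intro k
      have h1 : ∀ m, xs m k
          = ∑ j ∈ Finset.range (k + 1), recDel r s t (fun i => Amap r s t (xs m) i) j := by
        intro m
        rw [Finset.sum_congr rfl (fun j _ => recDel_spec r s t hr ht hs0 (xs m) j)]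
        exact (sum_del (xs m) k).symm
      simp only [h1, hxdef]
      exact tendsto_finset_sum _ fun j _ =>
        recDel_tendsto r s t (a := fun m i => Amap r s t (xs m) i) (b := A) hA j
    have hAx : ∀ n, Tendsto (fun l => Amap r s t (xs l) n) atTop (𝓝 (Amap r s t x n)) :=
      fun n => Amap_tendsto r s t hptw n
    -- key estimate via Fatou
    have key : ∀ ε : ℝ, 0 < ε → ∃ N, ∀ m, N ≤ m →
        sigmaP r s t p (xs m - x) ≤ ENNReal.ofReal (ε ^ M) := by
      intro ε hε
      obtain ⟨N, hN⟩ := hcauchy ε hε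
      refine ⟨N, fun m hm => ?_⟩
      have hF : sigmaP r s t p (xs m - x)
          ≤ liminf (fun l => sigmaP r s t p (xs m - xs l)) atTop := by
        refine sigma_le_liminf r s t p hp (fun n => ?_)
        have h1 : ∀ l, Amap r s t (xs m - xs l) n
            = Amap r s t (xs m) n - Amap r s t (xs l) n := fun l => Amap_sub r s t _ _ n
        rw [Amap_sub]
        simp only [h1]
        exact tendsto_const_nhds.sub (hAx n)
      refine le_trans hF (liminf_le_of_frequently_le' ?_)
      refine (Filter.eventually_atTop.mpr ⟨N, fun l hl => ?_⟩).frequently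
      have h1 := hN m l hm hl
      have hfin : sigmaP r s t p (xs m - xs l) ≠ ⊤ := ne_of_lt ((hmem _).mp (hdmem m l))
      rw [ENNReal.le_ofReal_iff_toReal_le hfin (by positivity)]
      have h2 : ((sigmaP r s t p (xs m - xs l)).toReal ^ (1/M)) ^ M < ε ^ M :=
        Real.rpow_lt_rpow (Real.rpow_nonneg ENNReal.toReal_nonneg _) h1 hM0
      rw [← Real.rpow_mul ENNReal.toReal_nonneg, one_div_mul_cancel (ne_of_gt hM0),
        Real.rpow_one] at h2
      exact h2.le
    -- x ∈ lrstp
    obtain ⟨N1, hN1⟩ := key 1 one_pos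
    have hd1 : xs N1 - x ∈ lrstp r s t p := by
      rw [hmem]
      exact lt_of_le_of_lt (hN1 N1 le_rfl) ENNReal.ofReal_lt_top
    have hxmem : x ∈ lrstp r s t p := by
      have hxeq : x = xs N1 - (xs N1 - x) := by funext k; simp
      rw [hxeq]
      exact hsubmem _ _ (hxs N1) hd1
    refine ⟨x, hxmem, ?_⟩
    rw [Metric.tendsto_atTop]
    intro ε hε
    obtain ⟨N, hN⟩ := key (ε/2) (half_pos hε)
    refine ⟨N, fun m hm => ?_⟩
    rw [Real.dist_eq, sub_zero, abs_of_nonneg (htilde_nonneg r s t p M _)]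
    have h1 := hN m hm
    have h2 : (sigmaP r s t p (xs m - x)).toReal ≤ (ε/2) ^ M := by
      have := ENNReal.toReal_mono ENNReal.ofReal_ne_top h1
      rwa [ENNReal.toReal_ofReal (by positivity)] at this
    calc htilde r s t p M (xs m - x)
        ≤ ((ε/2) ^ M) ^ (1/M) :=
          Real.rpow_le_rpow ENNReal.toReal_nonneg h2 (by positivity)
      _ = ε/2 := by
          rw [← Real.rpow_mul (by positivity), mul_one_div_cancel (ne_of_gt hM0),
            Real.rpow_one]
      _ < ε := half_lt_self hε
end

section
/- Let (a_n), (x_n) be real sequences and for each k let (via the inversion formula) x_k = ∑_{j=0}^k ∑_{l=0}^{k−j} (−1)^l (D^{(s)}_l / t_{l+j}) r_j y_j. Then the Abel-type summation identity holds for each n: ∑_{k=0}^n a_k x_k = ∑_{k=0}^n r_k [ a_k/(s_0 t_k) + (D^{(s)}_0/t_k − D^{(s)}_1/t_{k+1}) ∑_{j=k+1}^n a_j + ∑_{l=k+2}^n (−1)^{l−k} (D^{(s)}_{l−k}/t_l) (∑_{j=l}^n a_j) ] y_k. -/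
open Finset

lemma abel_aux (t D a : ℕ → ℝ) (n j : ℕ) (hj : j ≤ n) :
    ∑ l ∈ Finset.range (n - j + 1),
        (-1 : ℝ) ^ l * (D l / t (l + j)) * (∑ k ∈ Finset.Icc (j + l) n, a k)
      = a j * (D 0 / t j)
        + (D 0 / t j - D 1 / t (j + 1)) * (∑ k ∈ Finset.Icc (j + 1) n, a k)
        + ∑ l ∈ Finset.Icc (j + 2) n,
            (-1 : ℝ) ^ (l - j) * (D (l - j) / t l) * (∑ k ∈ Finset.Icc l n, a k) := by
  obtain ⟨N, rfl⟩ : ∃ N, n = j + N := ⟨n - j, by omega⟩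
  have hsplit : ∑ k ∈ Finset.Icc j (j + N), a k
      = a j + ∑ k ∈ Finset.Icc (j + 1) (j + N), a k := by
    rw [← Finset.Ioc_insert_left (by omega : j ≤ j + N), Finset.sum_insert (by simp),
      Finset.Icc_add_one_left_eq_Ioc]
  cases N with
  | zero =>
    simp only [Nat.add_zero, Nat.sub_self, Finset.range_one, Finset.sum_singleton,
      pow_zero, Nat.zero_add, Nat.add_zero,
      Finset.Icc_eq_empty (by omega : ¬ j + 1 ≤ j),
      Finset.Icc_eq_empty (by omega : ¬ j + 2 ≤ j), Finset.sum_empty,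
      Finset.Icc_self, mul_zero, add_zero]
    ring
  | succ M =>
    have hrng : j + (M + 1) - j = M + 1 := by omega
    rw [hrng, Finset.sum_range_succ', Finset.sum_range_succ']
    have hC : ∑ i ∈ Finset.range M,
        (-1 : ℝ) ^ (i + 1 + 1) * (D (i + 1 + 1) / t (i + 1 + 1 + j))
          * (∑ k ∈ Finset.Icc (j + (i + 1 + 1)) (j + (M + 1)), a k)
        = ∑ l ∈ Finset.Icc (j + 2) (j + (M + 1)),
            (-1 : ℝ) ^ (l - j) * (D (l - j) / t l) * (∑ k ∈ Finset.Icc l (j + (M + 1)), a k) := by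
      refine Finset.sum_nbij' (fun i => j + 2 + i) (fun l => l - (j + 2)) ?_ ?_ ?_ ?_ ?_
      · intro i hi; simp only [Finset.mem_range] at hi; simp only [Finset.mem_Icc]; omega
      · intro l hl; simp only [Finset.mem_Icc] at hl; simp only [Finset.mem_range]; omega
      · intro i _; omega
      · intro l hl; simp only [Finset.mem_Icc] at hl; omega
      · intro i hi
        rw [show j + 2 + i - j = i + 1 + 1 by omega, show j + 2 + i = i + 1 + 1 + j by omega,
          show j + (i + 1 + 1) = i + 1 + 1 + j by omega]
    rw [hC]
    simp only [pow_zero, zero_add, pow_one, Nat.zero_add, Nat.add_zero, one_mul]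
    rw [hsplit, show (1 : ℕ) + j = j + 1 by omega]
    ring

theorem abel_type_summation
    (r s t : ℕ → ℝ) (hr : ∀ n, r n ≠ 0) (ht : ∀ n, t n ≠ 0) (hs0 : s 0 ≠ 0)
    (D : ℕ → ℝ) (hD0 : D 0 = 1 / s 0)
    (hD : ∀ n, ∑ j ∈ Finset.range (n + 1), s j * D (n - j) =
      if n = 0 then 1 else 0)
    (a x y : ℕ → ℝ)
    (hx : ∀ k, x k = ∑ j ∈ Finset.range (k + 1), ∑ l ∈ Finset.range (k - j + 1),
      (-1 : ℝ) ^ l * (D l / t (l + j)) * r j * y j) :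
    ∀ n, ∑ k ∈ Finset.range (n + 1), a k * x k =
      ∑ k ∈ Finset.range (n + 1), r k *
        (a k / (s 0 * t k)
          + (D 0 / t k - D 1 / t (k + 1)) * (∑ j ∈ Finset.Icc (k + 1) n, a j)
          + ∑ l ∈ Finset.Icc (k + 2) n,
              (-1 : ℝ) ^ (l - k) * (D (l - k) / t l) * (∑ j ∈ Finset.Icc l n, a j))
        * y k := by
  intro n
  calc ∑ k ∈ Finset.range (n + 1), a k * x k
      = ∑ k ∈ Finset.range (n + 1), ∑ j ∈ Finset.range (k + 1),
          ∑ l ∈ Finset.range (k - j + 1),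
            a k * ((-1 : ℝ) ^ l * (D l / t (l + j)) * r j * y j) := by
        simp only [hx, Finset.mul_sum]
    _ = ∑ j ∈ Finset.range (n + 1), ∑ k ∈ Finset.Icc j n,
          ∑ l ∈ Finset.range (k - j + 1),
            a k * ((-1 : ℝ) ^ l * (D l / t (l + j)) * r j * y j) := by
        refine Finset.sum_comm' ?_
        intro k j
        simp only [Finset.mem_range, Finset.mem_Icc]
        omega
    _ = ∑ j ∈ Finset.range (n + 1), ∑ l ∈ Finset.range (n - j + 1),
          ∑ k ∈ Finset.Icc (j + l) n,
            a k * ((-1 : ℝ) ^ l * (D l / t (l + j)) * r j * y j) := by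
        refine Finset.sum_congr rfl fun j hj => ?_
        simp only [Finset.mem_range] at hj
        refine Finset.sum_comm' ?_
        intro k l
        simp only [Finset.mem_range, Finset.mem_Icc]
        omega
    _ = ∑ j ∈ Finset.range (n + 1), r j *
          (a j / (s 0 * t j)
            + (D 0 / t j - D 1 / t (j + 1)) * (∑ k ∈ Finset.Icc (j + 1) n, a k)
            + ∑ l ∈ Finset.Icc (j + 2) n,
                (-1 : ℝ) ^ (l - j) * (D (l - j) / t l) * (∑ k ∈ Finset.Icc l n, a k))
          * y j := by
        refine Finset.sum_congr rfl fun j hj => ?_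
        simp only [Finset.mem_range] at hj
        have hj' : j ≤ n := by omega
        have h1 : ∑ l ∈ Finset.range (n - j + 1), ∑ k ∈ Finset.Icc (j + l) n,
              a k * ((-1 : ℝ) ^ l * (D l / t (l + j)) * r j * y j)
            = (∑ l ∈ Finset.range (n - j + 1),
                (-1 : ℝ) ^ l * (D l / t (l + j)) * (∑ k ∈ Finset.Icc (j + l) n, a k))
              * (r j * y j) := by
          simp only [Finset.sum_mul, Finset.mul_sum]
          exact Finset.sum_congr rfl fun l _ =>
            Finset.sum_congr rfl fun k _ => by ring
        rw [h1, abel_aux t D a n j hj', hD0]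
        have hts : s 0 * t j ≠ 0 := mul_ne_zero hs0 (ht j)
        field_simp
end
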